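/- Let g be a positive, non-degenerate random variable with ν_1 := E[1/g] < ∞, and for B > 0 define the optimal two-slot expected energy J̄₂ᵒᵖᵗ(B) := E_g[ min_{0 ≤ b ≤ B} ( (2^b − 1)/g + ν_1 (2^{B−b} − 1) ) ] and the equal-bit expected energy J̄₂ᵉᑫ(B) := 2 (2^{B/2} − 1) ν_1. Then lim_{B → 0⁺} J̄₂ᵉᑫ(B) / J̄₂ᵒᵖᵗ(B) = ν_1 / E[min(1/g, ν_1)]. -/

import Mathlib

open MeasureTheory Filter

/-- Expected total energy of the optimal causal two-slot scheduler:
`J̄₂ᵒᵖᵗ(B) = E_g[ min_{0 ≤ b ≤ B} ( (2^b − 1)/g + ν₁ (2^{B−b} − 1) ) ]` with `ν₁ = E[1/g]`. -/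
noncomputable def Jopt2 {Ω : Type*} [MeasurableSpace Ω] (μ : Measure Ω) (g : Ω → ℝ)
    (B : ℝ) : ℝ :=
  ∫ ω, sInf ((fun b : ℝ => ((2 : ℝ) ^ b - 1) / g ω
      + (∫ ω', 1 / g ω' ∂μ) * ((2 : ℝ) ^ (B - b) - 1)) '' Set.Icc 0 B) ∂μ

/-- Expected total energy of the equal-bit two-slot scheduler:
`J̄₂ᵉᑫ(B) = 2 (2^{B/2} − 1) ν₁` with `ν₁ = E[1/g]`. -/
noncomputable def Jeq2 {Ω : Type*} [MeasurableSpace Ω] (μ : Measure Ω) (g : Ω → ℝ)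
    (B : ℝ) : ℝ :=
  2 * ((2 : ℝ) ^ (B / 2) - 1) * (∫ ω, 1 / g ω ∂μ)

/-! ### Auxiliary lemmas -/

/-- The pointwise minimization function, as a function of `x = 1/g ω`. -/
noncomputable def Faux (ν B x : ℝ) : ℝ :=
  sInf ((fun b : ℝ => ((2 : ℝ) ^ b - 1) * x + ν * ((2 : ℝ) ^ (B - b) - 1)) '' Set.Icc 0 B)

lemma log_mul_le_rpow_sub_one (t : ℝ) : t * Real.log 2 ≤ (2 : ℝ) ^ t - 1 := by
  have h := Real.add_one_le_exp (Real.log 2 * t)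
  rw [Real.rpow_def_of_pos (by norm_num : (0:ℝ) < 2)]
  nlinarith [h]

lemma rpow_sub_one_nonneg {t : ℝ} (ht : 0 ≤ t) : 0 ≤ (2 : ℝ) ^ t - 1 := by
  have := Real.rpow_le_rpow_of_exponent_le (by norm_num : (1:ℝ) ≤ 2) ht
  simpa using this

lemma Faux_nonempty (ν B : ℝ) (hB : 0 ≤ B) (x : ℝ) :
    ((fun b : ℝ => ((2 : ℝ) ^ b - 1) * x + ν * ((2 : ℝ) ^ (B - b) - 1)) '' Set.Icc 0 B).Nonempty :=
  ⟨_, ⟨0, ⟨le_refl 0, hB⟩, rfl⟩⟩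

lemma Faux_bddBelow (ν B : ℝ) (hν : 0 ≤ ν) (hB : 0 ≤ B) (x : ℝ) :
    BddBelow ((fun b : ℝ => ((2 : ℝ) ^ b - 1) * x + ν * ((2 : ℝ) ^ (B - b) - 1)) '' Set.Icc 0 B) := by
  refine ⟨-(((2:ℝ)^B - 1) * |x|), ?_⟩
  rintro y ⟨b, ⟨hb0, hbB⟩, rfl⟩
  have h1 : 0 ≤ (2:ℝ)^b - 1 := rpow_sub_one_nonneg hb0
  have h2 : (2:ℝ)^b - 1 ≤ (2:ℝ)^B - 1 := by
    have := Real.rpow_le_rpow_of_exponent_le (by norm_num : (1:ℝ) ≤ 2) hbB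
    linarith
  have h3 : 0 ≤ ν * ((2:ℝ)^(B-b) - 1) :=
    mul_nonneg hν (rpow_sub_one_nonneg (sub_nonneg.mpr hbB))
  have h4 : ((2:ℝ)^b - 1) * (-|x|) ≤ ((2:ℝ)^b - 1) * x :=
    mul_le_mul_of_nonneg_left (neg_abs_le x) h1
  have h5 : ((2:ℝ)^b - 1) * |x| ≤ ((2:ℝ)^B - 1) * |x| :=
    mul_le_mul_of_nonneg_right h2 (abs_nonneg x)
  dsimp only
  nlinarith

lemma Faux_mono (ν B : ℝ) (hν : 0 ≤ ν) (hB : 0 ≤ B) : Monotone (Faux ν B) := by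
  intro x y hxy
  refine le_csInf (Faux_nonempty ν B hB y) ?_
  rintro z ⟨b, hb, rfl⟩
  refine csInf_le_of_le (Faux_bddBelow ν B hν hB x) ⟨b, hb, rfl⟩ ?_
  have h1 : 0 ≤ (2:ℝ)^b - 1 := rpow_sub_one_nonneg hb.1
  have : ((2:ℝ)^b - 1) * x ≤ ((2:ℝ)^b - 1) * y := mul_le_mul_of_nonneg_left hxy h1
  dsimp only
  linarith

lemma Faux_lb (ν B x : ℝ) (hν : 0 ≤ ν) (hx : 0 ≤ x) (hB : 0 ≤ B) :
    B * Real.log 2 * min x ν ≤ Faux ν B x := by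
  refine le_csInf (Faux_nonempty ν B hB x) ?_
  rintro z ⟨b, ⟨hb0, hbB⟩, rfl⟩
  have hlog : 0 ≤ Real.log 2 := Real.log_nonneg (by norm_num)
  have l1 : b * Real.log 2 ≤ (2:ℝ)^b - 1 := log_mul_le_rpow_sub_one b
  have l2 : (B - b) * Real.log 2 ≤ (2:ℝ)^(B-b) - 1 := log_mul_le_rpow_sub_one (B - b)
  have m1 : min x ν ≤ x := min_le_left _ _
  have m2 : min x ν ≤ ν := min_le_right _ _
  have mnn : 0 ≤ min x ν := le_min hx hν
  have t1 : b * Real.log 2 * min x ν ≤ ((2:ℝ)^b - 1) * x := by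
    calc b * Real.log 2 * min x ν ≤ b * Real.log 2 * x :=
          mul_le_mul_of_nonneg_left m1 (mul_nonneg hb0 hlog)
      _ ≤ ((2:ℝ)^b - 1) * x := mul_le_mul_of_nonneg_right l1 hx
  have t2 : (B - b) * Real.log 2 * min x ν ≤ ν * ((2:ℝ)^(B-b) - 1) := by
    calc (B - b) * Real.log 2 * min x ν ≤ (B - b) * Real.log 2 * ν :=
          mul_le_mul_of_nonneg_left m2 (mul_nonneg (sub_nonneg.mpr hbB) hlog)
      _ ≤ ((2:ℝ)^(B-b) - 1) * ν := mul_le_mul_of_nonneg_right l2 hν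
      _ = ν * ((2:ℝ)^(B-b) - 1) := mul_comm _ _
  dsimp only
  nlinarith [t1, t2]

lemma Faux_ub (ν B x : ℝ) (hν : 0 ≤ ν) (hx : 0 ≤ x) (hB : 0 ≤ B) :
    Faux ν B x ≤ ((2:ℝ)^B - 1) * min x ν := by
  rcases le_total x ν with h | h
  · rw [min_eq_left h]
    refine csInf_le_of_le (Faux_bddBelow ν B hν hB x) ⟨B, ⟨hB, le_refl B⟩, rfl⟩ ?_
    dsimp only
    rw [sub_self, Real.rpow_zero]
    simp
  · rw [min_eq_right h]
    refine csInf_le_of_le (Faux_bddBelow ν B hν hB x) ⟨0, ⟨le_refl 0, hB⟩, rfl⟩ ?_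
    dsimp only
    rw [Real.rpow_zero, sub_zero]
    simp [mul_comm]

lemma slope_two : Tendsto (fun t : ℝ => ((2:ℝ)^t - 1) / t)
    (nhdsWithin 0 (Set.Ioi 0)) (nhds (Real.log 2)) := by
  have h := (Real.hasStrictDerivAt_const_rpow (by norm_num : (0:ℝ) < 2) 0).hasDerivAt
  rw [hasDerivAt_iff_tendsto_slope] at h
  have hsub : Set.Ioi (0:ℝ) ⊆ {(0:ℝ)}ᶜ := fun x hx => ne_of_gt hx
  have h2 := h.mono_left (nhdsWithin_mono 0 hsub)
  have h3 : Tendsto (slope (fun x : ℝ => (2:ℝ)^x) 0) (nhdsWithin 0 (Set.Ioi 0))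
      (nhds (Real.log 2)) := by simpa using h2
  refine h3.congr fun t => ?_
  simp [slope_def_field, Real.rpow_zero]

/-- As `B → 0⁺`, the energy ratio of equal-bit to optimal two-slot scheduling tends to
`ν₁ / E[min(1/g, ν₁)]`. -/
theorem ratio_eq_opt_tendsto_zero {Ω : Type*} [MeasurableSpace Ω] (μ : Measure Ω)
    [IsProbabilityMeasure μ]
    (g : Ω → ℝ) (hgpos : ∀ ω, 0 < g ω) (hgmeas : Measurable g)
    (hgnonconst : ¬ ∃ c : ℝ, ∀ᵐ ω ∂μ, g ω = c)
    (hint : Integrable (fun ω => 1 / g ω) μ) :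
    Tendsto (fun B : ℝ => Jeq2 μ g B / Jopt2 μ g B) (nhdsWithin 0 (Set.Ioi 0))
      (nhds ((∫ ω, 1 / g ω ∂μ)
        / (∫ ω, min (1 / g ω) (∫ ω', 1 / g ω' ∂μ) ∂μ))) := by
  set ν : ℝ := ∫ ω, 1 / g ω ∂μ with hνdef
  have hx : ∀ ω, 0 < 1 / g ω := fun ω => div_pos one_pos (hgpos ω)
  have hνpos : 0 < ν := by
    rw [hνdef, integral_pos_iff_support_of_nonneg (fun ω => (hx ω).le) hint]
    have hsupp : Function.support (fun ω => 1 / g ω) = Set.univ := by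
      ext ω; simp [Function.mem_support, (hgpos ω).ne']
    rw [hsupp]; simp
  have hmin_int : Integrable (fun ω => min (1 / g ω) ν) μ :=
    hint.inf (integrable_const ν)
  set M : ℝ := ∫ ω, min (1 / g ω) ν ∂μ with hMdef
  have hMpos : 0 < M := by
    rw [hMdef, integral_pos_iff_support_of_nonneg
      (fun ω => le_min (hx ω).le hνpos.le) hmin_int]
    have hsupp : Function.support (fun ω => min (1 / g ω) ν) = Set.univ := by
      ext ω
      simp only [Function.mem_support, Set.mem_univ, iff_true]
      exact (lt_min (hx ω) hνpos).ne'
    rw [hsupp]; simp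
  have hlog2 : 0 < Real.log 2 := Real.log_pos (by norm_num)
  -- rewrite Jopt2 via Faux
  have hJopt : ∀ B : ℝ, Jopt2 μ g B = ∫ ω, Faux ν B (1 / g ω) ∂μ := by
    intro B
    unfold Jopt2 Faux
    rw [← hνdef]
    refine integral_congr_ae (Filter.EventuallyEq.of_eq (funext fun ω => ?_))
    have himg : (fun b : ℝ => ((2:ℝ)^b - 1) / g ω + ν * ((2:ℝ)^(B-b) - 1))
        = (fun b : ℝ => ((2:ℝ)^b - 1) * (1 / g ω) + ν * ((2:ℝ)^(B-b) - 1)) :=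
      funext fun b => by rw [mul_one_div]
    rw [himg]
  -- key bounds
  have key : ∀ B : ℝ, 0 < B →
      B * Real.log 2 * M ≤ Jopt2 μ g B ∧ Jopt2 μ g B ≤ ((2:ℝ)^B - 1) * M := by
    intro B hB
    have hmeas : AEStronglyMeasurable (fun ω => Faux ν B (1 / g ω)) μ := by
      have hm1 : Measurable fun ω => 1 / g ω := measurable_const.div hgmeas
      exact ((Faux_mono ν B hνpos.le hB.le).measurable.comp hm1).aestronglyMeasurable
    have hub : ∀ ω, Faux ν B (1 / g ω) ≤ ((2:ℝ)^B - 1) * min (1 / g ω) ν :=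
      fun ω => Faux_ub ν B _ hνpos.le (hx ω).le hB.le
    have hlb : ∀ ω, B * Real.log 2 * min (1 / g ω) ν ≤ Faux ν B (1 / g ω) :=
      fun ω => Faux_lb ν B _ hνpos.le (hx ω).le hB.le
    have hnn : ∀ ω, 0 ≤ Faux ν B (1 / g ω) := fun ω =>
      le_trans (mul_nonneg (mul_nonneg hB.le (Real.log_nonneg (by norm_num)))
        (le_min (hx ω).le hνpos.le)) (hlb ω)
    have hBpow : 0 ≤ (2:ℝ)^B - 1 := rpow_sub_one_nonneg hB.le
    have hintF : Integrable (fun ω => Faux ν B (1 / g ω)) μ := by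
      refine Integrable.mono' (integrable_const (((2:ℝ)^B - 1) * ν)) hmeas
        (ae_of_all _ fun ω => ?_)
      rw [Real.norm_eq_abs, abs_of_nonneg (hnn ω)]
      exact le_trans (hub ω)
        (mul_le_mul_of_nonneg_left (min_le_right _ _) hBpow)
    constructor
    · rw [hJopt]
      calc B * Real.log 2 * M = ∫ ω, B * Real.log 2 * min (1 / g ω) ν ∂μ := by
            rw [integral_const_mul]
        _ ≤ ∫ ω, Faux ν B (1 / g ω) ∂μ :=
            integral_mono (hmin_int.const_mul _) hintF hlb
    · rw [hJopt]
      calc ∫ ω, Faux ν B (1 / g ω) ∂μ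
          ≤ ∫ ω, ((2:ℝ)^B - 1) * min (1 / g ω) ν ∂μ :=
            integral_mono hintF (hmin_int.const_mul _) hub
        _ = ((2:ℝ)^B - 1) * M := by rw [integral_const_mul]
  -- limit of Jopt2 / B
  have hJoptB : Tendsto (fun B => Jopt2 μ g B / B) (nhdsWithin 0 (Set.Ioi 0))
      (nhds (Real.log 2 * M)) := by
    refine tendsto_of_tendsto_of_tendsto_of_le_of_le' tendsto_const_nhds
      (slope_two.mul_const M) ?_ ?_
    · filter_upwards [self_mem_nhdsWithin] with B hB
      have h := (key B hB).1
      rw [le_div_iff₀ hB]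
      nlinarith
    · filter_upwards [self_mem_nhdsWithin] with B hB
      have h := (key B hB).2
      have hBne : (B:ℝ) ≠ 0 := ne_of_gt hB
      rw [div_le_iff₀ hB]
      have heq : ((2:ℝ)^B - 1) / B * M * B = ((2:ℝ)^B - 1) * M := by
        field_simp
      rw [heq]; exact h
  -- limit of Jeq2 / B
  have hJeqB : Tendsto (fun B => Jeq2 μ g B / B) (nhdsWithin 0 (Set.Ioi 0))
      (nhds (Real.log 2 * ν)) := by
    have hhalf : Tendsto (fun B : ℝ => B / 2) (nhdsWithin 0 (Set.Ioi 0))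
        (nhdsWithin 0 (Set.Ioi 0)) := by
      rw [tendsto_nhdsWithin_iff]
      constructor
      · have h0 : Tendsto (fun B : ℝ => B / 2) (nhds 0) (nhds (0 / 2)) :=
          tendsto_id.div_const 2
        simpa using h0.mono_left nhdsWithin_le_nhds
      · filter_upwards [self_mem_nhdsWithin] with B hB
        exact half_pos (Set.mem_Ioi.mp hB)
    have h2 := slope_two.comp hhalf
    have h3 := h2.const_mul ν
    have heq : ∀ᶠ B in nhdsWithin (0:ℝ) (Set.Ioi 0),
        ν * (((2:ℝ)^(B/2) - 1) / (B/2)) = Jeq2 μ g B / B := by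
      filter_upwards [self_mem_nhdsWithin] with B hB
      have hBne : B ≠ 0 := ne_of_gt hB
      unfold Jeq2
      rw [← hνdef]
      field_simp
    have h4 := h3.congr' heq
    have : Real.log 2 * ν = ν * Real.log 2 := mul_comm _ _
    rw [this]
    exact h4
  -- combine
  have hfinal := hJeqB.div hJoptB (ne_of_gt (mul_pos hlog2 hMpos))
  rw [mul_div_mul_left ν M (ne_of_gt hlog2)] at hfinal
  refine hfinal.congr' ?_
  filter_upwards [self_mem_nhdsWithin] with B hB
  have hBne : B ≠ 0 := ne_of_gt hB
  show Jeq2 μ g B / B / (Jopt2 μ g B / B) = Jeq2 μ g B / Jopt2 μ g B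
  rw [div_div_div_comm, div_self hBne, div_one]
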